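/- For the sequence (n_k)_{k≥1} of the explicit construction, and for all a, b ∈ ℕ with a ≠ b such that a/b ≠ 2^r for every r ∈ ℤ, there is a constant C (depending only on ε, R, d, a, b) such that for every integer c ≥ 0 one has #{(k,ℓ) ∈ ℕ² : k,ℓ ≥ 1, a·n_k − b·n_ℓ = c} ≤ C. -/

import Mathlib

open Real MeasureTheory Filter Finset

noncomputable section

/-- The block `Δ_i` of `R^i` consecutive positive integers. -/
def Block (R i : ℕ) : Finset ℕ :=
  Finset.Icc ((R ^ i - R) / (R - 1) + 1) ((R ^ (i + 1) - R) / (R - 1))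

/-- `M(i) = ⌈i^(1-ε)⌉`. -/
def Mfun (ε : ℝ) (i : ℕ) : ℕ := ⌈(i : ℝ) ^ (1 - ε)⌉₊

/-- The explicit construction: parameters `ε ∈ (0,1)`, an integer `R > 8/ε`, an integer
`d ≥ 1`, for each `i ≥ 1` a partition of `Δ_i` into consecutive intervals of integers
`Δ_i^(1) < ⋯ < Δ_i^(M(i))` (element-wise) of essentially equal cardinality, and the
sequence `n_k := 2^(2^(i^4)) * (2^k + m)` for `k ∈ Δ_i^(m)`. -/
structure ExplicitConstruction where
  ε : ℝ
  R : ℕ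
  d : ℕ
  sub : ℕ → ℕ → Finset ℕ
  n : ℕ → ℕ
  hε : ε ∈ Set.Ioo (0 : ℝ) 1
  hR : 8 / ε < (R : ℝ)
  hd : 1 ≤ d
  hpart : ∀ i, 1 ≤ i → Block R i = (Finset.Icc 1 (Mfun ε i)).biUnion (sub i)
  hconsec : ∀ i, 1 ≤ i → ∀ m ∈ Finset.Icc 1 (Mfun ε i), ∃ lo hi, sub i m = Finset.Icc lo hi
  horder : ∀ i, 1 ≤ i → ∀ m ∈ Finset.Icc 1 (Mfun ε i), ∀ m' ∈ Finset.Icc 1 (Mfun ε i),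
    m < m' → ∀ k ∈ sub i m, ∀ l ∈ sub i m', k < l
  hcard : ∀ i, 1 ≤ i → ∀ m ∈ Finset.Icc 1 (Mfun ε i),
    |((sub i m).card : ℝ) - (R : ℝ) ^ i / (Mfun ε i : ℝ)| ≤ 1
  hn : ∀ i, 1 ≤ i → ∀ m ∈ Finset.Icc 1 (Mfun ε i), ∀ k ∈ sub i m,
    n k = 2 ^ 2 ^ i ^ 4 * (2 ^ k + m)


/-- partial sums of geometric series -/
def sB (R i : ℕ) : ℕ := (R ^ i - R) / (R - 1)

lemma sB_one (R : ℕ) : sB R 1 = 0 := by simp [sB]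

lemma sB_succ (R : ℕ) (hR : 2 ≤ R) (i : ℕ) (hi : 1 ≤ i) :
    sB R (i + 1) = sB R i + R ^ i := by
  have hx : R ≤ R ^ i := by
    calc R = R ^ 1 := (pow_one R).symm
    _ ≤ R ^ i := Nat.pow_le_pow_right (by omega) hi
  have h1 : R ^ i * (R - 1) = R ^ i * R - R ^ i := by
    have h : R ^ i * R = R ^ i * (R - 1) + R ^ i := by
      rw [← Nat.mul_succ]; congr 1; omega
    omega
  have h2 : R ^ (i+1) - R = (R ^ i - R) + R ^ i * (R - 1) := by
    rw [h1, pow_succ]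
    have : R ^ i ≤ R ^ i * R := Nat.le_mul_of_pos_right _ (by omega)
    omega
  unfold sB
  rw [h2, Nat.add_mul_div_right _ _ (by omega : 0 < R - 1)]

lemma sB_mono (R : ℕ) (hR : 2 ≤ R) : ∀ i j, 1 ≤ i → i ≤ j → sB R i ≤ sB R j := by
  intro i j hi hij
  induction j with
  | zero => omega
  | succ j ih =>
    rcases Nat.lt_or_ge i (j+1) with h | h
    · have hj : 1 ≤ j := by omega
      have := ih (by omega)
      rw [sB_succ R hR j hj]
      omega
    · have : i = j + 1 := by omega
      subst this
      exact le_refl _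

lemma sB_cover (R : ℕ) (hR : 2 ≤ R) : ∀ k, 1 ≤ k →
    ∃ i, 1 ≤ i ∧ sB R i < k ∧ k ≤ sB R i + R ^ i := by
  intro k hk
  induction k with
  | zero => omega
  | succ k ih =>
    rcases Nat.lt_or_ge k 1 with h | h
    · refine ⟨1, le_refl _, ?_, ?_⟩
      · rw [sB_one]; omega
      · rw [sB_one]; have : 1 ≤ R ^ 1 := Nat.one_le_pow _ _ (by omega)
        omega
    · obtain ⟨i, hi1, hlt, hle⟩ := ih h
      rcases Nat.lt_or_ge k (sB R i + R ^ i) with h2 | h2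
      · exact ⟨i, hi1, by omega, by omega⟩
      · refine ⟨i + 1, by omega, ?_, ?_⟩
        · rw [sB_succ R hR i hi1]; omega
        · rw [sB_succ R hR i hi1]
          have : 1 ≤ R ^ (i+1) := Nat.one_le_pow _ _ (by omega)
          omega

lemma sB_unique (R : ℕ) (hR : 2 ≤ R) (i j k : ℕ) (hi : 1 ≤ i) (hj : 1 ≤ j)
    (h1 : sB R i < k) (h2 : k ≤ sB R i + R ^ i)
    (h3 : sB R j < k) (h4 : k ≤ sB R j + R ^ j) : i = j := by
  by_contra hne
  rcases Nat.lt_or_ge i j with h | h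
  · have : sB R i + R ^ i ≤ sB R j := by
      rw [← sB_succ R hR i hi]; exact sB_mono R hR _ _ (by omega) (by omega)
    omega
  · have hij : j < i := by omega
    have : sB R j + R ^ j ≤ sB R i := by
      rw [← sB_succ R hR j hj]; exact sB_mono R hR _ _ (by omega) (by omega)
    omega

lemma sB_ge (R : ℕ) (hR : 2 ≤ R) : ∀ i, 1 ≤ i → i - 1 ≤ sB R i := by
  intro i hi
  induction i with
  | zero => omega
  | succ i ih =>
    rcases Nat.lt_or_ge i 1 with h | h
    · interval_cases i
      simp [sB_one]
    · have := ih h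
      rw [sB_succ R hR i h]
      have : 1 ≤ R ^ i := Nat.one_le_pow _ _ (by omega)
      omega

lemma sB_le (R : ℕ) (hR : 2 ≤ R) (i : ℕ) (hi : 1 ≤ i) : sB R i + R ^ i ≤ R ^ (i+1) := by
  rw [← sB_succ R hR i hi]
  calc sB R (i+1) ≤ R ^ (i+1) - R := Nat.div_le_self _ _
  _ ≤ R ^ (i+1) := by omega

lemma R_ge (E : ExplicitConstruction) : 9 ≤ E.R := by
  have h1 := E.hε.1
  have h2 := E.hε.2
  have h3 := E.hR
  have h8 : (8 : ℝ) < 8 / E.ε := by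
    rw [lt_div_iff₀ h1]; nlinarith
  have : (8 : ℝ) < (E.R : ℝ) := by linarith
  exact_mod_cast this

lemma Mfun_le (ε : ℝ) (hε : 0 ≤ ε) (i : ℕ) (hi : 1 ≤ i) : Mfun ε i ≤ i := by
  unfold Mfun
  rw [Nat.ceil_le]
  have hb : (1 : ℝ) ≤ (i : ℝ) := by exact_mod_cast hi
  calc (i : ℝ) ^ (1 - ε) ≤ (i : ℝ) ^ (1 : ℝ) :=
        Real.rpow_le_rpow_of_exponent_le hb (by linarith)
  _ = (i : ℝ) := Real.rpow_one _

lemma exists_data (E : ExplicitConstruction) (k : ℕ) (hk : 1 ≤ k) :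
    ∃ i m, 1 ≤ i ∧ m ∈ Finset.Icc 1 (Mfun E.ε i) ∧ k ∈ E.sub i m ∧
      E.n k = 2 ^ 2 ^ i ^ 4 * (2 ^ k + m) ∧
      sB E.R i < k ∧ k ≤ sB E.R i + E.R ^ i ∧ m ≤ i ∧ i ≤ k ∧ k ≤ E.R ^ (i + 1) := by
  have hR : 2 ≤ E.R := by have := R_ge E; omega
  obtain ⟨i, hi1, hlt, hle⟩ := sB_cover E.R hR k hk
  have hblock : k ∈ Block E.R i := by
    unfold Block
    have h1 : (E.R ^ i - E.R) / (E.R - 1) = sB E.R i := rfl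
    have h2 : (E.R ^ (i+1) - E.R) / (E.R - 1) = sB E.R (i+1) := rfl
    rw [Finset.mem_Icc, h1, h2, sB_succ E.R hR i hi1]
    omega
  rw [E.hpart i hi1, Finset.mem_biUnion] at hblock
  obtain ⟨m, hm, hkm⟩ := hblock
  have hn := E.hn i hi1 m hm k hkm
  have hmi : m ≤ i := by
    have h1 := (Finset.mem_Icc.mp hm).2
    have h2 := Mfun_le E.ε (le_of_lt E.hε.1) i hi1
    omega
  have hik : i ≤ k := by
    have := sB_ge E.R hR i hi1
    omega
  exact ⟨i, m, hi1, hm, hkm, hn, hlt, hle, hmi, hik,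
    le_trans hle (sB_le E.R hR i hi1)⟩

lemma n_pos (E : ExplicitConstruction) (k : ℕ) (hk : 1 ≤ k) : 0 < E.n k := by
  obtain ⟨i, m, _, _, _, hn, _⟩ := exists_data E k hk
  rw [hn]
  positivity

lemma grow (E : ExplicitConstruction) (k : ℕ) (hk : 1 ≤ k) :
    3 * E.n k ≤ 2 * E.n (k + 1) := by
  have hR : 2 ≤ E.R := by have := R_ge E; omega
  obtain ⟨i, m, hi1, hm, hkm, hn, hlt, hle, hmi, hik, _⟩ := exists_data E k hk
  obtain ⟨i', m', hi1', hm', hkm', hn', hlt', hle', hmi', hik', _⟩ :=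
    exists_data E (k+1) (by omega)
  have hm2k : m ≤ 2 ^ k := le_trans (le_trans hmi hik) (le_of_lt ((Nat.lt_two_pow_self (n := k))))
  rcases Nat.lt_or_ge k (sB E.R i + E.R ^ i) with hcase | hcase
  · -- k+1 in same block
    have hieq : i' = i := sB_unique E.R hR i' i (k+1) hi1' hi1 hlt' hle' (by omega) (by omega)
    subst hieq
    have hmm : m ≤ m' := by
      by_contra hmm
      have := E.horder i' hi1 m' hm' m hm (by omega) (k+1) hkm' k hkm
      omega
    rw [hn, hn']
    have hnum : 3 * (2 ^ k + m) ≤ 2 * (2 ^ (k+1) + m') := by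
      have h2 : 2 ^ (k+1) = 2 * 2 ^ k := by rw [pow_succ]; ring
      omega
    calc 3 * (2 ^ 2 ^ i' ^ 4 * (2 ^ k + m)) = 2 ^ 2 ^ i' ^ 4 * (3 * (2 ^ k + m)) := by ring
    _ ≤ 2 ^ 2 ^ i' ^ 4 * (2 * (2 ^ (k+1) + m')) := Nat.mul_le_mul_left _ hnum
    _ = 2 * (2 ^ 2 ^ i' ^ 4 * (2 ^ (k+1) + m')) := by ring
  · -- k+1 in next block
    have hkeq : k = sB E.R i + E.R ^ i := by omega
    have hieq : i' = i + 1 := by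
      apply sB_unique E.R hR i' (i+1) (k+1) hi1' (by omega) hlt' hle'
      · rw [sB_succ E.R hR i hi1]; omega
      · rw [sB_succ E.R hR i hi1]
        have : 1 ≤ E.R ^ (i+1) := Nat.one_le_pow _ _ (by omega)
        omega
    subst hieq
    rw [hn, hn']
    have hexp : 2 ^ i ^ 4 + 1 ≤ 2 ^ (i+1) ^ 4 := by
      have h1 : i ^ 4 + 1 ≤ (i + 1) ^ 4 :=
        Nat.pow_lt_pow_left (by omega) (by norm_num)
      calc 2 ^ i ^ 4 + 1 ≤ 2 ^ i ^ 4 + 2 ^ i ^ 4 := by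
            have : 1 ≤ 2 ^ i ^ 4 := Nat.one_le_pow _ _ (by omega)
            omega
      _ = 2 ^ (i ^ 4 + 1) := by rw [pow_succ]; ring
      _ ≤ 2 ^ (i+1) ^ 4 := Nat.pow_le_pow_right (by omega) h1
    have hPQ : 2 * 2 ^ 2 ^ i ^ 4 ≤ 2 ^ 2 ^ (i+1) ^ 4 := by
      calc 2 * 2 ^ 2 ^ i ^ 4 = 2 ^ (2 ^ i ^ 4 + 1) := by rw [pow_succ]; ring
      _ ≤ 2 ^ 2 ^ (i+1) ^ 4 := Nat.pow_le_pow_right (by omega) hexp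
    set P := 2 ^ 2 ^ i ^ 4 with hP
    set Q := 2 ^ 2 ^ (i+1) ^ 4 with hQ
    have h2 : 2 ^ (k+1) = 2 * 2 ^ k := by rw [pow_succ]; ring
    calc 3 * (P * (2 ^ k + m)) ≤ 3 * (P * (2 ^ k + 2 ^ k)) := by
          apply Nat.mul_le_mul_left
          apply Nat.mul_le_mul_left
          omega
    _ = 6 * (P * 2 ^ k) := by ring
    _ ≤ 8 * (P * 2 ^ k) := by omega
    _ = 2 * ((2 * P) * (2 * 2 ^ k)) := by ring
    _ ≤ 2 * (Q * (2 * 2 ^ k)) := by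
          apply Nat.mul_le_mul_left
          apply Nat.mul_le_mul_right
          exact hPQ
    _ ≤ 2 * (Q * (2 ^ (k+1) + m')) := by
          apply Nat.mul_le_mul_left
          apply Nat.mul_le_mul_left
          omega

lemma n_mono (E : ExplicitConstruction) (k l : ℕ) (hk : 1 ≤ k) (hkl : k ≤ l) :
    E.n k ≤ E.n l := by
  induction l with
  | zero => omega
  | succ l ih =>
    rcases Nat.lt_or_ge l k with h | h
    · have : k = l + 1 := by omega
      subst this
      exact le_refl _
    · have h1 := ih h
      have h2 := grow E l (by omega)
      have h3 := n_pos E l (by omega)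
      omega

lemma n_strict (E : ExplicitConstruction) (k l : ℕ) (hk : 1 ≤ k) (hkl : k < l) :
    E.n k < E.n l := by
  have h1 := grow E k hk
  have h2 := n_mono E (k+1) l (by omega) (by omega)
  have h3 := n_pos E k hk
  omega

lemma grow' (E : ExplicitConstruction) (k l : ℕ) (hk : 1 ≤ k) (hkl : k < l) :
    3 * E.n k ≤ 2 * E.n l := by
  have h1 := grow E k hk
  have h2 := n_mono E (k+1) l (by omega) (by omega)
  omega

lemma pow_ne (a b : ℕ) (ha : 1 ≤ a) (hb : 1 ≤ b)
    (hpow : ∀ r : ℤ, (a : ℝ) / (b : ℝ) ≠ (2:ℝ) ^ r) (x y : ℕ) :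
    a * 2 ^ x ≠ b * 2 ^ y := by
  intro h
  apply hpow ((y : ℤ) - (x : ℤ))
  have hb0 : (b : ℝ) ≠ 0 := by positivity
  have hx0 : ((2:ℝ) ^ x) ≠ 0 := by positivity
  have hzp : ((2:ℝ)) ^ ((y : ℤ) - (x : ℤ)) = 2 ^ y / 2 ^ x := by
    rw [zpow_sub₀ (by norm_num : (2:ℝ) ≠ 0), zpow_natCast, zpow_natCast]
  rw [hzp, div_eq_div_iff hb0 hx0]
  have key : (a:ℝ) * 2 ^ x = (b:ℝ) * 2 ^ y := by exact_mod_cast h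
  linarith

lemma mul_two_pow_le (e : ℕ) : ∀ x, 2 * e + 4 ≤ x → x * 2 ^ e ≤ 2 ^ x := by
  intro x
  induction x with
  | zero => omega
  | succ x ih =>
    intro hx
    rcases Nat.lt_or_ge x (2 * e + 4) with h | h
    · have hxe : x = 2 * e + 3 := by omega
      subst hxe
      have h1 : 2 * e + 4 ≤ 2 ^ (e + 4) := by
        have := (Nat.lt_two_pow_self (n := e))
        have h2 : 2 ^ (e+4) = 16 * 2 ^ e := by rw [pow_add]; ring
        omega
      calc (2 * e + 3 + 1) * 2 ^ e ≤ 2 ^ (e+4) * 2 ^ e := Nat.mul_le_mul_right _ (by omega)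
      _ = 2 ^ (2 * e + 3 + 1) := by rw [← pow_add]; congr 1; omega
    · have h1 := ih h
      have h2 : 2 ^ e ≤ 2 ^ x := Nat.pow_le_pow_right (by omega) (by omega)
      have h3 : 2 ^ (x+1) = 2 * 2 ^ x := by rw [pow_succ]; ring
      have h4 : (x + 1) * 2 ^ e = x * 2 ^ e + 2 ^ e := by ring
      omega

lemma cond_lemma (R Γ : ℕ) (hR : 2 ≤ R) (ν : ℕ) (hν : R + Γ + 5 ≤ ν) :
    2 * (R ^ (ν + 1) + Γ) ≤ 2 ^ ((ν + 1) ^ 4) := by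
  have h1 : R ^ (ν+1) ≤ 2 ^ (R * (ν+1)) := by
    calc R ^ (ν+1) ≤ (2 ^ R) ^ (ν+1) := Nat.pow_le_pow_left (le_of_lt ((Nat.lt_two_pow_self (n := R)))) _
    _ = 2 ^ (R * (ν+1)) := by rw [← pow_mul]
  have h2 : Γ ≤ 2 ^ Γ := le_of_lt ((Nat.lt_two_pow_self (n := Γ)))
  have h3 : R * (ν+1) + Γ + 2 ≤ (ν+1)^4 := by
    have h4 : (ν+1)^2 ≤ (ν+1)^4 := Nat.pow_le_pow_right (by omega) (by omega)
    have h5 : (ν+1) * (R + Γ + 6) ≤ (ν+1)^2 := by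
      have : R + Γ + 6 ≤ ν + 1 := by omega
      calc (ν+1) * (R + Γ + 6) ≤ (ν+1) * (ν+1) := Nat.mul_le_mul_left _ this
      _ = (ν+1)^2 := by ring
    nlinarith
  have h6 : 2 ^ (R * (ν+1)) ≤ 2 ^ ((ν+1)^4 - 2) := Nat.pow_le_pow_right (by omega) (by omega)
  have h7 : 2 ^ Γ ≤ 2 ^ ((ν+1)^4 - 2) := Nat.pow_le_pow_right (by omega) (by omega)
  have h8 : 2 ^ 2 * 2 ^ ((ν+1)^4 - 2) = 2 ^ ((ν+1)^4) := by
    rw [← pow_add]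
    congr 1
    omega
  have h9 : (2:ℕ) ^ 2 = 4 := by norm_num
  rw [h9] at h8
  omega
/-- constants -/
def Gc (a b : ℕ) : ℕ := a + b + 3
def Dc (a b : ℕ) : ℕ := Gc a b + a + 1
def Γc (a b : ℕ) : ℕ := 4 * Dc a b + 4 * Gc a b + 10
def i0c (R a b : ℕ) : ℕ := R + Γc a b + 5
def Ec (a b : ℕ) : ℕ := a + b + Gc a b + 1
def K0c (R a b : ℕ) : ℕ := R ^ (i0c R a b + 1) + 2 * Ec a b + Γc a b + Gc a b + 10

lemma core (E : ExplicitConstruction) (a b : ℕ) (ha : 1 ≤ a) (hb : 1 ≤ b)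
    (hne : ∀ x y : ℕ, a * 2 ^ x ≠ b * 2 ^ y) (cn k l : ℕ) (hl1 : 1 ≤ l)
    (hk : K0c E.R a b < k)
    (heq : a * E.n k = b * E.n l + cn)
    (h3 : a * E.n k ≤ 3 * (b * E.n l)) :
    ∃ i, i0c E.R a b ≤ i ∧ 1 ≤ i ∧ k ≤ E.R ^ (i + 1) ∧
      2 ^ (2 ^ i ^ 4 + k) ≤ 2 ^ Dc a b * cn ∧ cn ≤ 2 ^ (2 ^ i ^ 4 + k + Dc a b) := by
  have hR : 2 ≤ E.R := by have := R_ge E; omega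
  have hk1 : 1 ≤ k := by have : 1 ≤ K0c E.R a b := by unfold K0c; omega
                         omega
  obtain ⟨i, m, hi1, hm, hkm, hn, hlt, hle, hmi, hik, hkR⟩ := exists_data E k hk1
  obtain ⟨j, m', hj1, hm', hlm', hn', hlt', hle', hmj, hjl, hlR⟩ := exists_data E l hl1
  have hm1 : 1 ≤ m := (Finset.mem_Icc.mp hm).1
  have hm'1 : 1 ≤ m' := (Finset.mem_Icc.mp hm').1
  have hm2k : m ≤ 2 ^ k := le_trans (le_trans hmi hik) (le_of_lt ((Nat.lt_two_pow_self (n := k))))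
  have hm2l : m' ≤ 2 ^ l := le_trans (le_trans hmj hjl) (le_of_lt ((Nat.lt_two_pow_self (n := l))))
  set G := Gc a b with hG
  set D := Dc a b with hD
  set Γ := Γc a b with hΓdef
  set i₀ := i0c E.R a b with hi₀def
  have hGval : G = a + b + 3 := rfl
  have hDval : D = G + a + 1 := rfl
  have hΓval : Γ = 4 * D + 4 * G + 10 := rfl
  have hi₀val : i₀ = E.R + Γ + 5 := rfl
  have hK0 : K0c E.R a b = E.R ^ (i₀ + 1) + 2 * Ec a b + Γ + G + 10 := rfl
  have hEc : Ec a b = a + b + G + 1 := rfl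
  -- step 1 : exponent window
  have ha2 : a ≤ 2 ^ a := le_of_lt ((Nat.lt_two_pow_self (n := a)))
  have hb2 : 3 * b ≤ 2 ^ (b + 2) := by
    have := (Nat.lt_two_pow_self (n := b))
    have h4 : 2 ^ (b+2) = 4 * 2 ^ b := by rw [pow_add]; ring
    omega
  have hBl : 2 ^ j ^ 4 + l ≤ 2 ^ i ^ 4 + k + G := by
    have c1 : 2 ^ (2 ^ j ^ 4 + l) ≤ 2 ^ (2 ^ i ^ 4 + k + a + 1) := by
      calc 2 ^ (2 ^ j ^ 4 + l) = 2 ^ 2 ^ j ^ 4 * 2 ^ l := by rw [pow_add]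
      _ ≤ b * (2 ^ 2 ^ j ^ 4 * (2 ^ l + m')) := by
          have : 2 ^ 2 ^ j ^ 4 * 2 ^ l ≤ 2 ^ 2 ^ j ^ 4 * (2 ^ l + m') :=
            Nat.mul_le_mul_left _ (by omega)
          calc 2 ^ 2 ^ j ^ 4 * 2 ^ l ≤ 2 ^ 2 ^ j ^ 4 * (2 ^ l + m') := this
          _ ≤ b * (2 ^ 2 ^ j ^ 4 * (2 ^ l + m')) := Nat.le_mul_of_pos_left _ (by omega)
      _ = b * E.n l := by rw [hn']
      _ ≤ a * E.n k := by omega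
      _ = a * (2 ^ 2 ^ i ^ 4 * (2 ^ k + m)) := by rw [hn]
      _ ≤ 2 ^ a * (2 ^ 2 ^ i ^ 4 * (2 ^ k + 2 ^ k)) := by
          apply Nat.mul_le_mul ha2
          exact Nat.mul_le_mul_left _ (by omega)
      _ = 2 ^ (2 ^ i ^ 4 + k + a + 1) := by rw [show 2^k + 2^k = 2^(k+1) by rw [pow_succ]; ring]
                                            rw [← pow_add, ← pow_add]
                                            congr 1
                                            ring
    have := (Nat.pow_le_pow_iff_right (by norm_num : 2 ≤ 2)).mp c1
    omega
  have hAk : 2 ^ i ^ 4 + k ≤ 2 ^ j ^ 4 + l + G := by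
    have c1 : 2 ^ (2 ^ i ^ 4 + k) ≤ 2 ^ (2 ^ j ^ 4 + l + b + 3) := by
      calc 2 ^ (2 ^ i ^ 4 + k) = 2 ^ 2 ^ i ^ 4 * 2 ^ k := by rw [pow_add]
      _ ≤ a * (2 ^ 2 ^ i ^ 4 * (2 ^ k + m)) := by
          calc 2 ^ 2 ^ i ^ 4 * 2 ^ k ≤ 2 ^ 2 ^ i ^ 4 * (2 ^ k + m) :=
            Nat.mul_le_mul_left _ (by omega)
          _ ≤ a * (2 ^ 2 ^ i ^ 4 * (2 ^ k + m)) := Nat.le_mul_of_pos_left _ (by omega)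
      _ = a * E.n k := by rw [hn]
      _ ≤ 3 * (b * E.n l) := h3
      _ = (3 * b) * (2 ^ 2 ^ j ^ 4 * (2 ^ l + m')) := by rw [hn']; ring
      _ ≤ 2 ^ (b+2) * (2 ^ 2 ^ j ^ 4 * (2 ^ l + 2 ^ l)) := by
          apply Nat.mul_le_mul hb2
          exact Nat.mul_le_mul_left _ (by omega)
      _ = 2 ^ (2 ^ j ^ 4 + l + b + 3) := by rw [show 2^l + 2^l = 2^(l+1) by rw [pow_succ]; ring]
                                            rw [← pow_add, ← pow_add]
                                            congr 1
                                            ring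
    have := (Nat.pow_le_pow_iff_right (by norm_num : 2 ≤ 2)).mp c1
    omega
  -- step 2 : i = j and i large
  have hii₀ : i₀ ≤ i := by
    have h1 : E.R ^ (i₀ + 1) < E.R ^ (i + 1) := by
      calc E.R ^ (i₀ + 1) < k := by omega
      _ ≤ E.R ^ (i + 1) := hkR
    have := (Nat.pow_lt_pow_iff_right hR).mp h1
    omega
  have hij : i = j := by
    by_contra hne'
    rcases Nat.lt_or_ge i j with hlt2 | hge2
    · -- i < j
      have h2A : 2 * 2 ^ i ^ 4 ≤ 2 ^ j ^ 4 := by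
        have h1 : i ^ 4 + 1 ≤ j ^ 4 := by
          have := Nat.pow_lt_pow_left hlt2 (by norm_num : 4 ≠ 0)
          omega
        calc 2 * 2 ^ i ^ 4 = 2 ^ (i ^ 4 + 1) := by rw [pow_succ]; ring
        _ ≤ 2 ^ j ^ 4 := Nat.pow_le_pow_right (by omega) h1
      have hcond : 2 * (E.R ^ j + Γ) ≤ 2 ^ j ^ 4 := by
        have hj2 : j - 1 + 1 = j := by omega
        have := cond_lemma E.R Γ hR (j - 1) (by omega)
        rw [hj2] at this
        exact this
      have hkRj : k ≤ E.R ^ j := by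
        calc k ≤ E.R ^ (i+1) := hkR
        _ ≤ E.R ^ j := Nat.pow_le_pow_right (by omega) (by omega)
      linarith
    · -- i > j
      have hgt : j < i := by omega
      have h2B : 2 * 2 ^ j ^ 4 ≤ 2 ^ i ^ 4 := by
        have h1 : j ^ 4 + 1 ≤ i ^ 4 := by
          have := Nat.pow_lt_pow_left hgt (by norm_num : 4 ≠ 0)
          omega
        calc 2 * 2 ^ j ^ 4 = 2 ^ (j ^ 4 + 1) := by rw [pow_succ]; ring
        _ ≤ 2 ^ i ^ 4 := Nat.pow_le_pow_right (by omega) h1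
      have hkl : k ≤ l + G := by linarith [Nat.zero_le (2 ^ j ^ 4)]
      have hlbig : E.R ^ (i₀ + 1) < E.R ^ (j + 1) := by
        calc E.R ^ (i₀ + 1) < k - G := by
              rw [hK0] at hk
              omega
        _ ≤ l := by omega
        _ ≤ E.R ^ (j+1) := hlR
      have hji₀ : i₀ ≤ j := by
        have := (Nat.pow_lt_pow_iff_right hR).mp hlbig
        omega
      have hcond : 2 * (E.R ^ (j+1) + Γ) ≤ 2 ^ (j+1) ^ 4 := cond_lemma E.R Γ hR j (by omega)
      have hcond2 : 2 ^ (j+1) ^ 4 ≤ 2 ^ i ^ 4 := by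
        apply Nat.pow_le_pow_right (by omega)
        exact Nat.pow_le_pow_left (by omega) _
      linarith
  subst hij
  -- now same block exponent; step 3
  have hklG : k ≤ l + G ∧ l ≤ k + G := by omega
  set μ := min k l with hμ
  have hμ1 : 1 ≤ μ := by omega
  have hμk : k ≤ μ + G := by omega
  have hμl : l ≤ μ + G := by omega
  -- smallness
  have hSk : a * m + b * m' ≤ (a + b) * k := by
    have h1 : a * m ≤ a * k := Nat.mul_le_mul_left _ (by omega)
    have h2 : b * m' ≤ b * k := Nat.mul_le_mul_left _ (by omega)
    have h3' : (a+b) * k = a * k + b * k := by ring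
    omega
  have hEk : 2 * Ec a b + 4 ≤ k := by
    rw [hK0] at hk
    omega
  have hhelp : k * 2 ^ Ec a b ≤ 2 ^ k := mul_two_pow_le (Ec a b) k hEk
  have hS3 : 2 * (a * m + b * m') ≤ 2 ^ μ := by
    have h1 : 2 * (a * m + b * m') * 2 ^ G ≤ 2 ^ k := by
      have h2 : 2 * (a + b) ≤ 2 ^ (a + b + 1) := by
        have := (Nat.lt_two_pow_self (n := (a+b)))
        have h4 : 2 ^ (a+b+1) = 2 * 2 ^ (a+b) := by rw [pow_succ]; ring
        omega
      calc 2 * (a * m + b * m') * 2 ^ G ≤ 2 * ((a+b) * k) * 2 ^ G := by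
            apply Nat.mul_le_mul_right
            omega
      _ = (2 * (a+b)) * k * 2 ^ G := by ring
      _ ≤ 2 ^ (a+b+1) * k * 2 ^ G := by
            apply Nat.mul_le_mul_right
            exact Nat.mul_le_mul_right _ h2
      _ = k * 2 ^ Ec a b := by
            rw [hEc, hGval]
            rw [show a + b + (a+b+3) + 1 = (a+b+1) + (a+b+3) by ring, pow_add]
            ring
      _ ≤ 2 ^ k := hhelp
    have h5 : 2 ^ k ≤ 2 ^ μ * 2 ^ G := by
      rw [← pow_add]
      exact Nat.pow_le_pow_right (by omega) hμk
    have h6 : 2 * (a * m + b * m') * 2 ^ G ≤ 2 ^ μ * 2 ^ G := le_trans h1 h5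
    exact Nat.le_of_mul_le_mul_right h6 (by positivity)
  -- dyadic gap
  have hgap : b * 2 ^ l + 2 ^ μ ≤ a * 2 ^ k ∨ a * 2 ^ k + 2 ^ μ ≤ b * 2 ^ l := by
    obtain ⟨k', hk'⟩ : ∃ k', k = μ + k' := ⟨k - μ, by omega⟩
    obtain ⟨l', hl'⟩ : ∃ l', l = μ + l' := ⟨l - μ, by omega⟩
    have hne' := hne k' l'
    rcases Nat.lt_or_ge (a * 2 ^ k') (b * 2 ^ l') with h | h
    · right
      have : a * 2 ^ k' + 1 ≤ b * 2 ^ l' := by omega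
      calc a * 2 ^ k + 2 ^ μ = (a * 2 ^ k' + 1) * 2 ^ μ := by
            rw [hk', pow_add]; ring
      _ ≤ (b * 2 ^ l') * 2 ^ μ := Nat.mul_le_mul_right _ this
      _ = b * 2 ^ l := by rw [hl', pow_add]; ring
    · left
      have : b * 2 ^ l' + 1 ≤ a * 2 ^ k' := by omega
      calc b * 2 ^ l + 2 ^ μ = (b * 2 ^ l' + 1) * 2 ^ μ := by
            rw [hl', pow_add]; ring
      _ ≤ (a * 2 ^ k') * 2 ^ μ := Nat.mul_le_mul_right _ this
      _ = a * 2 ^ k := by rw [hk', pow_add]; ring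
  -- the equation
  set P := a * (2 ^ k + m) with hP
  set Q := b * (2 ^ l + m') with hQ
  have hPeq : P = a * 2 ^ k + a * m := by rw [hP]; ring
  have hQeq : Q = b * 2 ^ l + b * m' := by rw [hQ]; ring
  have heq2 : 2 ^ 2 ^ i ^ 4 * P = 2 ^ 2 ^ i ^ 4 * Q + cn := by
    rw [hn, hn'] at heq
    rw [hP, hQ]
    calc 2 ^ 2 ^ i ^ 4 * (a * (2 ^ k + m)) = a * (2 ^ 2 ^ i ^ 4 * (2 ^ k + m)) := by ring
    _ = b * (2 ^ 2 ^ i ^ 4 * (2 ^ l + m')) + cn := heq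
    _ = 2 ^ 2 ^ i ^ 4 * (b * (2 ^ l + m')) + cn := by ring
  have hQP : Q ≤ P := by
    have : 2 ^ 2 ^ i ^ 4 * Q ≤ 2 ^ 2 ^ i ^ 4 * P := by omega
    exact Nat.le_of_mul_le_mul_left this (by positivity)
  set w := P - Q with hwdef
  have hw : cn = 2 ^ 2 ^ i ^ 4 * w := by
    have h1 : P = Q + w := by omega
    have h2 : 2 ^ 2 ^ i ^ 4 * P = 2 ^ 2 ^ i ^ 4 * Q + 2 ^ 2 ^ i ^ 4 * w := by
      rw [h1]; ring
    omega
  -- lower bound on w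
  have hwlow : 2 ^ μ ≤ 2 * w := by
    have hPQw : P = Q + w := by omega
    rcases hgap with hg | hg
    · have ham : a * m ≥ 0 := Nat.zero_le _
      linarith [Nat.zero_le (b * m'), Nat.zero_le (a * m), Nat.zero_le (b * 2 ^ l)]
    · exfalso
      have ham1 : 1 ≤ a * m := Nat.one_le_iff_ne_zero.mpr (by positivity)
      linarith [Nat.zero_le (b * m'), Nat.zero_le (a * m), Nat.zero_le (b * 2 ^ l)]
  -- upper bound on w
  have hwup : w ≤ 2 ^ (k + a + 1) := by
    have h1 : w ≤ P := by omega
    have h2 : P ≤ a * (2 ^ k + 2 ^ k) := by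
      rw [hP]
      exact Nat.mul_le_mul_left _ (by omega)
    have h3' : a * (2 ^ k + 2 ^ k) ≤ 2 ^ a * 2 ^ (k + 1) := by
      rw [show 2^k + 2^k = 2^(k+1) by rw [pow_succ]; ring]
      exact Nat.mul_le_mul_right _ ha2
    have h4 : 2 ^ a * 2 ^ (k+1) = 2 ^ (k + a + 1) := by
      rw [← pow_add]; congr 1; ring
    omega
  refine ⟨i, hii₀, hi1, hkR, ?_, ?_⟩
  · -- 2 ^ (A + k) ≤ 2 ^ D * cn
    have c1 : 2 ^ (2 ^ i ^ 4 + k) ≤ 2 ^ (G + 1) * cn := by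
      calc 2 ^ (2 ^ i ^ 4 + k) = 2 ^ 2 ^ i ^ 4 * 2 ^ k := by rw [pow_add]
      _ ≤ 2 ^ 2 ^ i ^ 4 * (2 ^ μ * 2 ^ G) := by
          apply Nat.mul_le_mul_left
          rw [← pow_add]
          exact Nat.pow_le_pow_right (by omega) hμk
      _ ≤ 2 ^ 2 ^ i ^ 4 * ((2 * w) * 2 ^ G) := by
          apply Nat.mul_le_mul_left
          exact Nat.mul_le_mul_right _ hwlow
      _ = 2 ^ (G + 1) * (2 ^ 2 ^ i ^ 4 * w) := by rw [pow_succ]; ring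
      _ = 2 ^ (G + 1) * cn := by rw [← hw]
    calc 2 ^ (2 ^ i ^ 4 + k) ≤ 2 ^ (G + 1) * cn := c1
    _ ≤ 2 ^ D * cn := by
        apply Nat.mul_le_mul_right
        exact Nat.pow_le_pow_right (by omega) (by omega)
  · -- cn ≤ 2 ^ (A + k + D)
    calc cn = 2 ^ 2 ^ i ^ 4 * w := hw
    _ ≤ 2 ^ 2 ^ i ^ 4 * 2 ^ (k + a + 1) := Nat.mul_le_mul_left _ hwup
    _ = 2 ^ (2 ^ i ^ 4 + (k + a + 1)) := by rw [← pow_add]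
    _ ≤ 2 ^ (2 ^ i ^ 4 + k + D) := Nat.pow_le_pow_right (by omega) (by omega)

/-- Lemma 2.1 (i): if `a/b` is not an integer power of `2`, the total number of solutions
`(k, ℓ)` of `a n_k - b n_ℓ = c` is bounded uniformly in `c ≥ 0`. -/
theorem statement1 (E : ExplicitConstruction) (a b : ℕ) (ha : 1 ≤ a) (hb : 1 ≤ b)
    (hab : a ≠ b) (hpow : ∀ r : ℤ, (a : ℝ) / (b : ℝ) ≠ (2:ℝ) ^ r) :
    ∃ C : ℕ, ∀ c : ℤ, 0 ≤ c →
      {p : ℕ × ℕ | 1 ≤ p.1 ∧ 1 ≤ p.2 ∧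
          (a : ℤ) * (E.n p.1 : ℤ) - (b : ℤ) * (E.n p.2 : ℤ) = c}.Finite ∧
      {p : ℕ × ℕ | 1 ≤ p.1 ∧ 1 ≤ p.2 ∧
          (a : ℤ) * (E.n p.1 : ℤ) - (b : ℤ) * (E.n p.2 : ℤ) = c}.ncard ≤ C := by
  have hne := pow_ne a b ha hb hpow
  have hR : 2 ≤ E.R := by have := R_ge E; omega
  set K₀ := K0c E.R a b with hK₀
  set D := Dc a b with hD
  have hK₀10 : 10 ≤ K₀ := by rw [hK₀]; unfold K0c; exact Nat.le_add_left _ _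
  refine ⟨K₀ + 4 * D + 3, ?_⟩
  intro c hc
  set cn := c.toNat with hcn
  set S : Set (ℕ × ℕ) := {p : ℕ × ℕ | 1 ≤ p.1 ∧ 1 ≤ p.2 ∧
      (a : ℤ) * (E.n p.1 : ℤ) - (b : ℤ) * (E.n p.2 : ℤ) = c} with hSdef
  have hnat : ∀ p : ℕ × ℕ, p ∈ S → a * E.n p.1 = b * E.n p.2 + cn := by
    intro p hp
    obtain ⟨-, -, hp3⟩ := hp
    have h1 : (a:ℤ) * (E.n p.1 : ℤ) = (b:ℤ) * (E.n p.2 : ℤ) + c := by linarith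
    rw [← Int.toNat_of_nonneg hc] at h1
    exact_mod_cast h1
  have ninj : ∀ x y : ℕ, 1 ≤ x → 1 ≤ y → E.n x = E.n y → x = y := by
    intro x y hx hy hxy
    rcases lt_trichotomy x y with h | h | h
    · have := n_strict E x y hx h; omega
    · exact h
    · have := n_strict E y x hy h; omega
  have hinj : Set.InjOn Prod.fst S := by
    intro p hp q hq hpq
    have h1 := hnat p hp
    have h2 := hnat q hq
    rw [hpq] at h1
    have h3 : b * E.n p.2 = b * E.n q.2 := by
      have hBq : b * E.n q.1 = b * E.n q.1 := rfl
      linarith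
    have h4 : E.n p.2 = E.n q.2 := Nat.eq_of_mul_eq_mul_left (by omega) h3
    have h5 := ninj p.2 q.2 hp.2.1 hq.2.1 h4
    exact Prod.ext hpq h5
  set Ks : Set ℕ := Prod.fst '' S with hKs
  rcases Set.eq_empty_or_nonempty S with hS0 | hS0
  · constructor
    · rw [hS0]; exact Set.finite_empty
    · rw [hS0]; simp
  have hKs0 : Ks.Nonempty := hS0.image _
  set kmin := sInf Ks with hkmin
  have hkminKs : kmin ∈ Ks := Nat.sInf_mem hKs0
  obtain ⟨q, hqS, hqk⟩ := hkminKs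
  -- key : nonminimal large solutions satisfy a n_k ≤ 3 b n_l
  have key : ∀ r : ℕ × ℕ, r ∈ S → K₀ < r.1 → kmin < r.1 →
      a * E.n r.1 ≤ 3 * (b * E.n r.2) := by
    intro r hrS hrbig hrmin
    have heqr := hnat r hrS
    have heqmin := hnat q hqS
    have hblmin : 1 ≤ b * E.n q.2 := by
      have h0 := n_pos E q.2 hqS.2.1
      exact Nat.one_le_iff_ne_zero.mpr (by positivity)
    have t1 : cn + 1 ≤ a * E.n q.1 := by linarith
    have t2 : E.n q.1 ≤ E.n (r.1 - 1) :=
      n_mono E q.1 (r.1 - 1) hqS.1 (by omega)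
    have t2' : a * E.n q.1 ≤ a * E.n (r.1 - 1) := Nat.mul_le_mul_left _ t2
    have t3 : 3 * E.n (r.1 - 1) ≤ 2 * E.n r.1 := by
      have hg := grow E (r.1 - 1) (by omega)
      have hr1 : r.1 - 1 + 1 = r.1 := by omega
      rwa [hr1] at hg
    have t3' : a * (3 * E.n (r.1 - 1)) ≤ a * (2 * E.n r.1) := Nat.mul_le_mul_left _ t3
    linarith
  -- CLOSE : two nonminimal large solutions are close
  have hCLOSE : ∀ k ∈ Ks, ∀ k' ∈ Ks, K₀ < k → K₀ < k' → kmin < k → kmin < k' →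
      k ≤ k' + 2 * D := by
    intro k hkKs k' hk'Ks hkbig hk'big hkminlt hk'minlt
    obtain ⟨p, hpS, hpk⟩ := hkKs
    obtain ⟨p', hp'S, hp'k⟩ := hk'Ks
    obtain ⟨i, hi0, hi1, hkRi, hlow, hup⟩ :=
      core E a b ha hb hne cn p.1 p.2 hpS.2.1 (by rw [hpk]; exact hkbig) (hnat p hpS)
        (key p hpS (by omega) (by omega))
    obtain ⟨i', hi0', hi1', hkRi', hlow', hup'⟩ :=
      core E a b ha hb hne cn p'.1 p'.2 hp'S.2.1 (by rw [hp'k]; exact hk'big) (hnat p' hp'S)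
        (key p' hp'S (by omega) (by omega))
    have hp1 : 1 ≤ p.1 := hpS.1
    have hp'1 : 1 ≤ p'.1 := hp'S.1
    have e1 : 2 ^ i ^ 4 + p.1 ≤ 2 ^ i' ^ 4 + p'.1 + 2 * D := by
      have c1 : 2 ^ (2 ^ i ^ 4 + p.1) ≤ 2 ^ (2 ^ i' ^ 4 + p'.1 + 2 * D) := by
        calc 2 ^ (2 ^ i ^ 4 + p.1) ≤ 2 ^ D * cn := hlow
        _ ≤ 2 ^ D * 2 ^ (2 ^ i' ^ 4 + p'.1 + D) := Nat.mul_le_mul_left _ hup'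
        _ = 2 ^ (2 ^ i' ^ 4 + p'.1 + 2 * D) := by rw [← pow_add]; congr 1; ring
      exact (Nat.pow_le_pow_iff_right (by norm_num : 2 ≤ 2)).mp c1
    have e2 : 2 ^ i' ^ 4 + p'.1 ≤ 2 ^ i ^ 4 + p.1 + 2 * D := by
      have c1 : 2 ^ (2 ^ i' ^ 4 + p'.1) ≤ 2 ^ (2 ^ i ^ 4 + p.1 + 2 * D) := by
        calc 2 ^ (2 ^ i' ^ 4 + p'.1) ≤ 2 ^ D * cn := hlow'
        _ ≤ 2 ^ D * 2 ^ (2 ^ i ^ 4 + p.1 + D) := Nat.mul_le_mul_left _ hup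
        _ = 2 ^ (2 ^ i ^ 4 + p.1 + 2 * D) := by rw [← pow_add]; congr 1; ring
      exact (Nat.pow_le_pow_iff_right (by norm_num : 2 ≤ 2)).mp c1
    have hΓ4D : Γc a b = 4 * D + 4 * Gc a b + 10 := rfl
    rcases lt_trichotomy i i' with hii | hii | hii
    · exfalso
      have h2A : 2 * 2 ^ i ^ 4 ≤ 2 ^ i' ^ 4 := by
        have h1 : i ^ 4 + 1 ≤ i' ^ 4 := by
          have := Nat.pow_lt_pow_left hii (by norm_num : 4 ≠ 0)
          omega
        calc 2 * 2 ^ i ^ 4 = 2 ^ (i ^ 4 + 1) := by rw [pow_succ]; ring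
        _ ≤ 2 ^ i' ^ 4 := Nat.pow_le_pow_right (by omega) h1
      have hcond : 2 * (E.R ^ i' + Γc a b) ≤ 2 ^ i' ^ 4 := by
        have hj2 : i' - 1 + 1 = i' := by omega
        have hcl := cond_lemma E.R (Γc a b) hR (i' - 1) (by
          have : i0c E.R a b = E.R + Γc a b + 5 := rfl
          omega)
        rwa [hj2] at hcl
      have hkR' : p.1 ≤ E.R ^ i' := by
        calc p.1 ≤ E.R ^ (i + 1) := hkRi
        _ ≤ E.R ^ i' := Nat.pow_le_pow_right (by omega) (by omega)
      linarith [Nat.zero_le (Gc a b), Nat.zero_le (2 ^ i ^ 4)]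
    · subst hii
      rw [← hpk, ← hp'k]
      omega
    · exfalso
      have h2A : 2 * 2 ^ i' ^ 4 ≤ 2 ^ i ^ 4 := by
        have h1 : i' ^ 4 + 1 ≤ i ^ 4 := by
          have := Nat.pow_lt_pow_left hii (by norm_num : 4 ≠ 0)
          omega
        calc 2 * 2 ^ i' ^ 4 = 2 ^ (i' ^ 4 + 1) := by rw [pow_succ]; ring
        _ ≤ 2 ^ i ^ 4 := Nat.pow_le_pow_right (by omega) h1
      have hcond : 2 * (E.R ^ i + Γc a b) ≤ 2 ^ i ^ 4 := by
        have hj2 : i - 1 + 1 = i := by omega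
        have hcl := cond_lemma E.R (Γc a b) hR (i - 1) (by
          have : i0c E.R a b = E.R + Γc a b + 5 := rfl
          omega)
        rwa [hj2] at hcl
      have hkR' : p'.1 ≤ E.R ^ i := by
        calc p'.1 ≤ E.R ^ (i' + 1) := hkRi'
        _ ≤ E.R ^ i := Nat.pow_le_pow_right (by omega) (by omega)
      linarith [Nat.zero_le (Gc a b), Nat.zero_le (2 ^ i' ^ 4)]
  -- covering finset
  have hfinal : ∃ F : Finset ℕ, Ks ⊆ ↑F ∧ F.card ≤ K₀ + 4 * D + 3 := by
    by_cases hbig : ∃ k ∈ Ks, K₀ < k ∧ kmin < k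
    · obtain ⟨k₁, hk₁Ks, hk₁big, hk₁min⟩ := hbig
      refine ⟨(Finset.Icc 0 K₀ ∪ Finset.Icc (k₁ - 2 * D) (k₁ + 2 * D)) ∪ {kmin}, ?_, ?_⟩
      · intro k hkKs
        simp only [Finset.coe_union, Set.mem_union, Finset.coe_Icc, Set.mem_Icc,
          Finset.coe_singleton, Set.mem_singleton_iff]
        rcases Nat.lt_or_ge K₀ k with h1 | h1
        · rcases Nat.lt_or_ge kmin k with h2 | h2
          · left; right
            constructor
            · have := hCLOSE k₁ hk₁Ks k hkKs hk₁big h1 hk₁min h2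
              omega
            · have := hCLOSE k hkKs k₁ hk₁Ks h1 hk₁big h2 hk₁min
              omega
          · right
            have := Nat.sInf_le hkKs
            omega
        · left; left; omega
      · calc ((Finset.Icc 0 K₀ ∪ Finset.Icc (k₁ - 2 * D) (k₁ + 2 * D)) ∪ {kmin}).card
            ≤ (Finset.Icc 0 K₀ ∪ Finset.Icc (k₁ - 2 * D) (k₁ + 2 * D)).card + ({kmin} : Finset ℕ).card :=
              Finset.card_union_le _ _
        _ ≤ (Finset.Icc 0 K₀).card + (Finset.Icc (k₁ - 2 * D) (k₁ + 2 * D)).card + 1 := by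
              have := Finset.card_union_le (Finset.Icc 0 K₀) (Finset.Icc (k₁ - 2 * D) (k₁ + 2 * D))
              simp only [Finset.card_singleton]
              omega
        _ ≤ K₀ + 4 * D + 3 := by
              rw [Nat.card_Icc, Nat.card_Icc]
              omega
    · refine ⟨Finset.Icc 0 K₀ ∪ {kmin}, ?_, ?_⟩
      · intro k hkKs
        simp only [Finset.coe_union, Set.mem_union, Finset.coe_Icc, Set.mem_Icc,
          Finset.coe_singleton, Set.mem_singleton_iff]
        rcases Nat.lt_or_ge K₀ k with h1 | h1
        · rcases Nat.lt_or_ge kmin k with h2 | h2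
          · exact absurd ⟨k, hkKs, h1, h2⟩ hbig
          · right
            have := Nat.sInf_le hkKs
            omega
        · left; omega
      · calc (Finset.Icc 0 K₀ ∪ {kmin}).card
            ≤ (Finset.Icc 0 K₀).card + ({kmin} : Finset ℕ).card := Finset.card_union_le _ _
        _ ≤ K₀ + 4 * D + 3 := by
              rw [Nat.card_Icc]
              simp only [Finset.card_singleton]
              omega
  obtain ⟨F, hFsub, hFcard⟩ := hfinal
  have hKsfin : Ks.Finite := Set.Finite.subset F.finite_toSet hFsub
  have hSfin : S.Finite := Set.Finite.of_finite_image hKsfin hinj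
  refine ⟨hSfin, ?_⟩
  have h1 : S.ncard = Ks.ncard := (Set.ncard_image_of_injOn hinj).symm
  have h2 : Ks.ncard ≤ F.card := by
    have := Set.ncard_le_ncard hFsub F.finite_toSet
    rwa [Set.ncard_coe_finset] at this
  omega
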